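/- Let A and B be real symmetric n×n matrices with Q(A) ∩ Q(B) = N(A) ∩ N(B) and dim(N(A) ∩ N(B)) ≤ n − 3. Then there exists a pair (μ, σ) ∈ ℝ² with (μ, σ) ≠ (0, 0) such that μA + σB is positive semidefinite and N(μA + σB) = N(A) ∩ N(B). -/

import Mathlib

open Matrix

section aux
variable {n : ℕ}

private lemma bilin_comm (M : Matrix (Fin n) (Fin n) ℝ) (hM : M.IsSymm) (x y : Fin n → ℝ) :
    x ⬝ᵥ M *ᵥ y = y ⬝ᵥ M *ᵥ x := by
  have hM' : Mᵀ = M := hM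
  rw [Matrix.dotProduct_mulVec, ← Matrix.mulVec_transpose, hM', dotProduct_comm]

private lemma qf_add (M : Matrix (Fin n) (Fin n) ℝ) (hM : M.IsSymm) (x y : Fin n → ℝ) :
    (x + y) ⬝ᵥ M *ᵥ (x + y) = x ⬝ᵥ M *ᵥ x + 2 * (x ⬝ᵥ M *ᵥ y) + y ⬝ᵥ M *ᵥ y := by
  simp only [Matrix.mulVec_add, dotProduct_add, add_dotProduct, bilin_comm M hM y x]
  ring

private lemma qf_smul (M : Matrix (Fin n) (Fin n) ℝ) (c : ℝ) (x : Fin n → ℝ) :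
    (c • x) ⬝ᵥ M *ᵥ (c • x) = c ^ 2 * (x ⬝ᵥ M *ᵥ x) := by
  simp only [Matrix.mulVec_smul, dotProduct_smul, smul_dotProduct, smul_eq_mul]
  ring

private lemma qf_combo (A B : Matrix (Fin n) (Fin n) ℝ) (μ σ : ℝ) (v : Fin n → ℝ) :
    v ⬝ᵥ (μ • A + σ • B) *ᵥ v = μ * (v ⬝ᵥ A *ᵥ v) + σ * (v ⬝ᵥ B *ᵥ v) := by
  simp only [Matrix.add_mulVec, Matrix.smul_mulVec, dotProduct_add, dotProduct_smul,
    smul_eq_mul]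

private lemma qf_lin2 (M : Matrix (Fin n) (Fin n) ℝ) (hM : M.IsSymm) (a b : ℝ)
    (x y : Fin n → ℝ) :
    (a • x + b • y) ⬝ᵥ M *ᵥ (a • x + b • y) =
      a ^ 2 * (x ⬝ᵥ M *ᵥ x) + 2 * (a * b) * (x ⬝ᵥ M *ᵥ y) + b ^ 2 * (y ⬝ᵥ M *ᵥ y) := by
  simp only [Matrix.mulVec_add, Matrix.mulVec_smul, dotProduct_add, add_dotProduct,
    dotProduct_smul, smul_dotProduct, smul_eq_mul, bilin_comm M hM y x]
  ring

private lemma qf_lin3 (M : Matrix (Fin n) (Fin n) ℝ) (hM : M.IsSymm) (a b c : ℝ)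
    (x y z : Fin n → ℝ) :
    (a • x + b • y + c • z) ⬝ᵥ M *ᵥ (a • x + b • y + c • z) =
      a ^ 2 * (x ⬝ᵥ M *ᵥ x) + b ^ 2 * (y ⬝ᵥ M *ᵥ y) + c ^ 2 * (z ⬝ᵥ M *ᵥ z)
      + 2 * (a * b) * (x ⬝ᵥ M *ᵥ y) + 2 * (a * c) * (x ⬝ᵥ M *ᵥ z)
      + 2 * (b * c) * (y ⬝ᵥ M *ᵥ z) := by
  simp only [Matrix.mulVec_add, Matrix.mulVec_smul, dotProduct_add, add_dotProduct,
    dotProduct_smul, smul_dotProduct, smul_eq_mul, bilin_comm M hM y x, bilin_comm M hM z x,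
    bilin_comm M hM z y]
  ring

private lemma cont_qf (M : Matrix (Fin n) (Fin n) ℝ) :
    Continuous fun v : Fin n → ℝ => v ⬝ᵥ M *ᵥ v := by
  simp only [dotProduct, Matrix.mulVec]
  exact continuous_finset_sum _ fun i _ =>
    (continuous_apply i).mul (continuous_finset_sum _ fun j _ =>
      continuous_const.mul (continuous_apply j))

private def dpL (u : Fin n → ℝ) : (Fin n → ℝ) →ₗ[ℝ] ℝ where
  toFun w := u ⬝ᵥ w
  map_add' a b := dotProduct_add u a b
  map_smul' c a := by simp [dotProduct_smul]

@[simp] private lemma dpL_apply (u w : Fin n → ℝ) : dpL u w = u ⬝ᵥ w := rfl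

end aux

set_option maxHeartbeats 2000000 in
/-- if `Q(A) ∩ Q(B) = N(A) ∩ N(B)` and `dim(N(A) ∩ N(B)) ≤ n − 3`, then
there is `(μ, σ) ≠ (0, 0)` with `μA + σB ≽ 0` and `N(μA + σB) = N(A) ∩ N(B)`. -/
theorem stmt_9 {n : ℕ} (A B : Matrix (Fin n) (Fin n) ℝ)
    (hA : A.IsSymm) (hB : B.IsSymm)
    (hQN : ∀ v : Fin n → ℝ,
      (v ⬝ᵥ A *ᵥ v = 0 ∧ v ⬝ᵥ B *ᵥ v = 0) ↔ (A *ᵥ v = 0 ∧ B *ᵥ v = 0))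
    (hdim : Module.finrank ℝ
      ↥(LinearMap.ker A.mulVecLin ⊓ LinearMap.ker B.mulVecLin) + 3 ≤ n) :
    ∃ μ σ : ℝ, (μ, σ) ≠ (0, 0) ∧ (μ • A + σ • B).PosSemidef ∧
      ∀ x : Fin n → ℝ, (μ • A + σ • B) *ᵥ x = 0 ↔ (A *ᵥ x = 0 ∧ B *ᵥ x = 0) := by
  classical
  set q₁ : (Fin n → ℝ) → ℝ := fun v => v ⬝ᵥ A *ᵥ v with hq₁def
  set q₂ : (Fin n → ℝ) → ℝ := fun v => v ⬝ᵥ B *ᵥ v with hq₂def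
  set K : Submodule ℝ (Fin n → ℝ) := LinearMap.ker A.mulVecLin ⊓ LinearMap.ker B.mulVecLin
    with hKdef
  obtain ⟨W, hKW⟩ := Submodule.exists_isCompl K
  have hfinW : 3 ≤ Module.finrank ℝ W := by
    have h1 := Submodule.finrank_add_eq_of_isCompl hKW
    rw [Module.finrank_fin_fun] at h1
    omega
  have hKmem : ∀ v : Fin n → ℝ, v ∈ K ↔ (A *ᵥ v = 0 ∧ B *ᵥ v = 0) := by
    intro v
    simp [hKdef, Submodule.mem_inf, LinearMap.mem_ker, Matrix.mulVecLin_apply]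
  have hiso : ∀ v : Fin n → ℝ, v ∈ W → q₁ v = 0 → q₂ v = 0 → v = 0 := by
    intro v hvW h1 h2
    have hvK : v ∈ K := (hKmem v).mpr ((hQN v).mp ⟨h1, h2⟩)
    have hb : v ∈ (⊥ : Submodule ℝ (Fin n → ℝ)) := by
      rw [← hKW.inf_eq_bot]
      exact ⟨hvK, hvW⟩
    simpa using hb
  -- the key "no antipodal pair" lemma
  have hant : ∀ v₀ v₁ : Fin n → ℝ, v₀ ∈ W → v₁ ∈ W → v₀ ≠ 0 → v₁ ≠ 0 → ∀ t : ℝ, 0 < t →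
      ¬(q₁ v₁ = -t * q₁ v₀ ∧ q₂ v₁ = -t * q₂ v₀) := by
    rintro v₀ v₁ hv₀W hv₁W hv₀ hv₁ t ht ⟨he1, he2⟩
    set μ₀ := q₁ v₀ with hμ₀
    set σ₀ := q₂ v₀ with hσ₀
    have hρ : 0 < μ₀ ^ 2 + σ₀ ^ 2 := by
      rcases eq_or_ne μ₀ 0 with h | h
      · rcases eq_or_ne σ₀ 0 with h' | h'
        · exact absurd (hiso v₀ hv₀W h h') hv₀
        · positivity
      · positivity
    set P := μ₀ • A + σ₀ • B with hP
    set Qm := σ₀ • A + (-μ₀) • B with hQm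
    have hPsymm : P.IsSymm := by
      have hA' : Aᵀ = A := hA
      have hB' : Bᵀ = B := hB
      show Pᵀ = P
      rw [hP, Matrix.transpose_add, Matrix.transpose_smul, Matrix.transpose_smul, hA', hB']
    have hQmsymm : Qm.IsSymm := by
      have hA' : Aᵀ = A := hA
      have hB' : Bᵀ = B := hB
      show Qmᵀ = Qm
      rw [hQm, Matrix.transpose_add, Matrix.transpose_smul, Matrix.transpose_smul, hA', hB']
    have hqfP : ∀ v, v ⬝ᵥ P *ᵥ v = μ₀ * q₁ v + σ₀ * q₂ v := fun v => qf_combo A B μ₀ σ₀ v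
    have hqfQ : ∀ v, v ⬝ᵥ Qm *ᵥ v = σ₀ * q₁ v + (-μ₀) * q₂ v := fun v =>
      qf_combo A B σ₀ (-μ₀) v
    have hPv₀ : v₀ ⬝ᵥ P *ᵥ v₀ = μ₀ ^ 2 + σ₀ ^ 2 := by rw [hqfP]; ring
    have hQv₀ : v₀ ⬝ᵥ Qm *ᵥ v₀ = 0 := by rw [hqfQ]; ring
    have hPv₁ : v₁ ⬝ᵥ P *ᵥ v₁ = -t * (μ₀ ^ 2 + σ₀ ^ 2) := by rw [hqfP, he1, he2]; ring
    have hQv₁ : v₁ ⬝ᵥ Qm *ᵥ v₁ = 0 := by rw [hqfQ, he1, he2]; ring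
    have hnoU : ∀ u : Fin n → ℝ, u ∈ W → u ⬝ᵥ P *ᵥ u = 0 → u ⬝ᵥ Qm *ᵥ u = 0 → u = 0 := by
      intro u hu hp hq
      rw [hqfP] at hp
      rw [hqfQ] at hq
      have h1 : q₁ u * (μ₀ ^ 2 + σ₀ ^ 2) = 0 := by linear_combination μ₀ * hp + σ₀ * hq
      have h2 : q₂ u * (μ₀ ^ 2 + σ₀ ^ 2) = 0 := by linear_combination σ₀ * hp - μ₀ * hq
      exact hiso u hu ((mul_eq_zero.mp h1).resolve_right hρ.ne')
        ((mul_eq_zero.mp h2).resolve_right hρ.ne')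
    have ivt : ∀ v : ℝ → Fin n → ℝ, ContinuousOn v (Set.Icc 0 1) →
        (∀ s ∈ Set.Icc (0:ℝ) 1, v s ∈ W) → (∀ s ∈ Set.Icc (0:ℝ) 1, v s ≠ 0) →
        (∀ s ∈ Set.Icc (0:ℝ) 1, (v s) ⬝ᵥ Qm *ᵥ (v s) = 0) →
        (v 1) ⬝ᵥ P *ᵥ (v 1) ≤ 0 → 0 ≤ (v 0) ⬝ᵥ P *ᵥ (v 0) → False := by
      intro v hc hWm hnz hq h1 h0
      have hcont : ContinuousOn (fun s => (v s) ⬝ᵥ P *ᵥ (v s)) (Set.Icc 0 1) :=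
        (cont_qf P).comp_continuousOn hc
      obtain ⟨s, hs, hps⟩ := intermediate_value_Icc' (by norm_num : (0:ℝ) ≤ 1) hcont ⟨h1, h0⟩
      exact hnz s hs (hnoU _ (hWm s hs) hps (hq s hs))
    have hPv₀pos : 0 < v₀ ⬝ᵥ P *ᵥ v₀ := by rw [hPv₀]; exact hρ
    have hPv₁neg : v₁ ⬝ᵥ P *ᵥ v₁ < 0 := by rw [hPv₁]; nlinarith
    have hind : ∀ a b : ℝ, a • v₀ + b • v₁ = 0 → a = 0 ∧ b = 0 := by
      intro a b hab
      rcases eq_or_ne b 0 with hb | hb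
      · rw [hb, zero_smul, add_zero] at hab
        rcases smul_eq_zero.mp hab with h | h
        · exact ⟨h, hb⟩
        · exact absurd h hv₀
      · exfalso
        have hv₁eq : v₁ = (-(a / b)) • v₀ := by
          have h1 : b • v₁ = (-a) • v₀ := by
            rw [neg_smul]
            rw [add_comm] at hab
            exact eq_neg_of_add_eq_zero_left hab
          calc v₁ = b⁻¹ • (b • v₁) := (inv_smul_smul₀ hb v₁).symm
          _ = b⁻¹ • ((-a) • v₀) := by rw [h1]
          _ = (-(a / b)) • v₀ := by
              rw [smul_smul]
              congr 1
              rw [div_eq_mul_inv]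
              ring
        have hneg := hPv₁neg
        rw [hv₁eq, qf_smul] at hneg
        nlinarith [mul_nonneg (sq_nonneg (-(a / b))) hPv₀pos.le]
    set co : ℝ → ℝ := fun s => Real.cos (Real.pi / 2 * s) with hco
    set sn : ℝ → ℝ := fun s => Real.sin (Real.pi / 2 * s) with hsn
    have htrig : ∀ s : ℝ, s ∈ Set.Icc (0:ℝ) 1 →
        0 ≤ co s ∧ 0 ≤ sn s ∧ ¬(co s = 0 ∧ sn s = 0) := by
      intro s hs
      obtain ⟨h0, h1⟩ := hs
      have hpi := Real.pi_pos
      refine ⟨Real.cos_nonneg_of_mem_Icc ⟨by nlinarith, by nlinarith⟩,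
        Real.sin_nonneg_of_nonneg_of_le_pi (by nlinarith) (by nlinarith), ?_⟩
      rintro ⟨hc, hsn'⟩
      have hpyth : Real.sin (Real.pi / 2 * s) ^ 2 + Real.cos (Real.pi / 2 * s) ^ 2 = 1 :=
        Real.sin_sq_add_cos_sq (Real.pi / 2 * s)
      have hc' : Real.cos (Real.pi / 2 * s) = 0 := hc
      have hs' : Real.sin (Real.pi / 2 * s) = 0 := hsn'
      rw [hc', hs'] at hpyth
      norm_num at hpyth
    have hco0 : co 0 = 1 := by show Real.cos (Real.pi / 2 * 0) = 1; rw [mul_zero, Real.cos_zero]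
    have hsn0 : sn 0 = 0 := by show Real.sin (Real.pi / 2 * 0) = 0; rw [mul_zero, Real.sin_zero]
    have hco1 : co 1 = 0 := by
      show Real.cos (Real.pi / 2 * 1) = 0; rw [mul_one, Real.cos_pi_div_two]
    have hsn1 : sn 1 = 1 := by
      show Real.sin (Real.pi / 2 * 1) = 1; rw [mul_one, Real.sin_pi_div_two]
    have hcocont : Continuous co := Real.continuous_cos.comp (continuous_const.mul continuous_id)
    have hsncont : Continuous sn := Real.continuous_sin.comp (continuous_const.mul continuous_id)
    set β := v₀ ⬝ᵥ Qm *ᵥ v₁ with hβdef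
    by_cases hβ : β = 0
    · -- the plane span(v₀,v₁) is totally isotropic for Qm : straight arc
      refine ivt (fun s => co s • v₀ + sn s • v₁) ?_ ?_ ?_ ?_ ?_ ?_
      · exact ((hcocont.smul continuous_const).add (hsncont.smul continuous_const)).continuousOn
      · intro s hs
        exact W.add_mem (W.smul_mem _ hv₀W) (W.smul_mem _ hv₁W)
      · intro s hs h
        obtain ⟨h1, h2⟩ := hind _ _ h
        exact (htrig s hs).2.2 ⟨h1, h2⟩
      · intro s hs
        show (co s • v₀ + sn s • v₁) ⬝ᵥ Qm *ᵥ (co s • v₀ + sn s • v₁) = 0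
        rw [qf_lin2 Qm hQmsymm, hQv₀, hQv₁, ← hβdef, hβ]
        ring
      · show (co 1 • v₀ + sn 1 • v₁) ⬝ᵥ P *ᵥ (co 1 • v₀ + sn 1 • v₁) ≤ 0
        rw [hco1, hsn1, zero_smul, one_smul, zero_add]
        exact hPv₁neg.le
      · show 0 ≤ (co 0 • v₀ + sn 0 • v₁) ⬝ᵥ P *ᵥ (co 0 • v₀ + sn 0 • v₁)
        rw [hco0, hsn0, one_smul, zero_smul, add_zero]
        exact hPv₀pos.le
    · -- pick w Qm-orthogonal to both v₀ and v₁, outside their span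
      set L : ↥W →ₗ[ℝ] ℝ × ℝ :=
        (((dpL v₀).comp Qm.mulVecLin).comp W.subtype).prod
          (((dpL v₁).comp Qm.mulVecLin).comp W.subtype) with hL
      have hkerne : LinearMap.ker L ≠ ⊥ := by
        intro hbot
        have h1 := LinearMap.finrank_range_add_finrank_ker L
        have h2 : Module.finrank ℝ ↥(LinearMap.range L) ≤ 2 := by
          have h3 := Submodule.finrank_le (LinearMap.range L)
          have h4 : Module.finrank ℝ (ℝ × ℝ) = 2 := by
            rw [Module.finrank_prod, Module.finrank_self]
          omega
        have h5 : Module.finrank ℝ ↥(LinearMap.ker L) = 0 := by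
          rw [hbot]
          exact finrank_bot ℝ ↥W
        omega
      obtain ⟨w', hw'ker, hw'0⟩ := Submodule.exists_mem_ne_zero_of_ne_bot hkerne
      have hLw : (v₀ ⬝ᵥ Qm *ᵥ (↑w' : Fin n → ℝ) = 0) ∧
          (v₁ ⬝ᵥ Qm *ᵥ (↑w' : Fin n → ℝ) = 0) := by
        have h := LinearMap.mem_ker.mp hw'ker
        rw [hL] at h
        simpa [LinearMap.prod_apply, LinearMap.comp_apply, Matrix.mulVecLin_apply,
          Prod.ext_iff] using h
      set w : Fin n → ℝ := ↑w' with hwdef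
      have hwW : w ∈ W := w'.2
      have hw0 : w ≠ 0 := fun h => hw'0 (Subtype.ext h)
      obtain ⟨hbw0, hbw1⟩ := hLw
      have hwspan : ∀ a b : ℝ, w ≠ a • v₀ + b • v₁ := by
        intro a b habs
        have e0 : (0 : ℝ) = a * 0 + b * β := by
          calc (0:ℝ) = v₀ ⬝ᵥ Qm *ᵥ w := hbw0.symm
          _ = a * (v₀ ⬝ᵥ Qm *ᵥ v₀) + b * (v₀ ⬝ᵥ Qm *ᵥ v₁) := by
              rw [habs, Matrix.mulVec_add, Matrix.mulVec_smul, Matrix.mulVec_smul,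
                dotProduct_add, dotProduct_smul, dotProduct_smul, smul_eq_mul, smul_eq_mul]
          _ = a * 0 + b * β := by rw [hQv₀, ← hβdef]
        have hb0 : b = 0 := by
          have hbβ : b * β = 0 := by linarith
          exact (mul_eq_zero.mp hbβ).resolve_right hβ
        have e1 : (0 : ℝ) = a * β + b * 0 := by
          calc (0:ℝ) = v₁ ⬝ᵥ Qm *ᵥ w := hbw1.symm
          _ = a * (v₁ ⬝ᵥ Qm *ᵥ v₀) + b * (v₁ ⬝ᵥ Qm *ᵥ v₁) := by
              rw [habs, Matrix.mulVec_add, Matrix.mulVec_smul, Matrix.mulVec_smul,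
                dotProduct_add, dotProduct_smul, dotProduct_smul, smul_eq_mul, smul_eq_mul]
          _ = a * β + b * 0 := by rw [hQv₁, bilin_comm Qm hQmsymm v₁ v₀, ← hβdef]
        have ha0 : a = 0 := by
          have haβ : a * β = 0 := by linarith
          exact (mul_eq_zero.mp haβ).resolve_right hβ
        apply hw0
        rw [habs, ha0, hb0]
        simp
      have hindw : ∀ a b c : ℝ, a • v₀ + b • v₁ + c • w = 0 → a = 0 ∧ b = 0 ∧ c = 0 := by
        intro a b c habc
        rcases eq_or_ne c 0 with hc | hc
        · rw [hc, zero_smul, add_zero] at habc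
          obtain ⟨ha, hb⟩ := hind a b habc
          exact ⟨ha, hb, hc⟩
        · exfalso
          apply hwspan (-(a / c)) (-(b / c))
          have h1 : c • w = (-a) • v₀ + (-b) • v₁ := by
            rw [neg_smul, neg_smul, ← neg_add]
            exact eq_neg_of_add_eq_zero_right habc
          have hsa : c⁻¹ * (-a) = -(a / c) := by rw [div_eq_mul_inv]; ring
          have hsb : c⁻¹ * (-b) = -(b / c) := by rw [div_eq_mul_inv]; ring
          calc w = c⁻¹ • (c • w) := (inv_smul_smul₀ hc w).symm
          _ = c⁻¹ • ((-a) • v₀ + (-b) • v₁) := by rw [h1]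
          _ = (-(a / c)) • v₀ + (-(b / c)) • v₁ := by
              rw [smul_add, smul_smul, smul_smul, hsa, hsb]
      set γ := w ⬝ᵥ Qm *ᵥ w with hγdef
      rcases eq_or_ne γ 0 with hγ | hγ
      · -- degenerate case: go through w
        have hγ' : w ⬝ᵥ Qm *ᵥ w = 0 := by rw [← hγdef]; exact hγ
        rcases lt_trichotomy (w ⬝ᵥ P *ᵥ w) 0 with hpw | hpw | hpw
        · refine ivt (fun s => co s • v₀ + (0:ℝ) • v₁ + sn s • w) ?_ ?_ ?_ ?_ ?_ ?_
          · exact (((hcocont.smul continuous_const).add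
              (continuous_const : Continuous fun _ : ℝ => (0:ℝ) • v₁)).add
              (hsncont.smul continuous_const)).continuousOn
          · intro s hs
            exact W.add_mem (W.add_mem (W.smul_mem _ hv₀W) (W.smul_mem _ hv₁W))
              (W.smul_mem _ hwW)
          · intro s hs h
            obtain ⟨h1, _, h3⟩ := hindw _ _ _ h
            exact (htrig s hs).2.2 ⟨h1, h3⟩
          · intro s hs
            show (co s • v₀ + (0:ℝ) • v₁ + sn s • w) ⬝ᵥ Qm *ᵥ
              (co s • v₀ + (0:ℝ) • v₁ + sn s • w) = 0
            rw [qf_lin3 Qm hQmsymm, hQv₀, hQv₁, hγ', ← hβdef, hbw0, hbw1]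
            ring
          · show (co 1 • v₀ + (0:ℝ) • v₁ + sn 1 • w) ⬝ᵥ P *ᵥ
              (co 1 • v₀ + (0:ℝ) • v₁ + sn 1 • w) ≤ 0
            rw [hco1, hsn1, zero_smul, zero_smul, one_smul, zero_add, zero_add]
            exact hpw.le
          · show 0 ≤ (co 0 • v₀ + (0:ℝ) • v₁ + sn 0 • w) ⬝ᵥ P *ᵥ
              (co 0 • v₀ + (0:ℝ) • v₁ + sn 0 • w)
            rw [hco0, hsn0, one_smul, zero_smul, zero_smul, add_zero, add_zero]
            exact hPv₀pos.le
        · exact hw0 (hnoU w hwW hpw hγ')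
        · refine ivt (fun s => (0:ℝ) • v₀ + sn s • v₁ + co s • w) ?_ ?_ ?_ ?_ ?_ ?_
          · exact (((continuous_const : Continuous fun _ : ℝ => (0:ℝ) • v₀).add
              (hsncont.smul continuous_const)).add
              (hcocont.smul continuous_const)).continuousOn
          · intro s hs
            exact W.add_mem (W.add_mem (W.smul_mem _ hv₀W) (W.smul_mem _ hv₁W))
              (W.smul_mem _ hwW)
          · intro s hs h
            obtain ⟨_, h2, h3⟩ := hindw _ _ _ h
            exact (htrig s hs).2.2 ⟨h3, h2⟩
          · intro s hs
            show ((0:ℝ) • v₀ + sn s • v₁ + co s • w) ⬝ᵥ Qm *ᵥ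
              ((0:ℝ) • v₀ + sn s • v₁ + co s • w) = 0
            rw [qf_lin3 Qm hQmsymm, hQv₀, hQv₁, hγ', ← hβdef, hbw0, hbw1]
            ring
          · show ((0:ℝ) • v₀ + sn 1 • v₁ + co 1 • w) ⬝ᵥ P *ᵥ
              ((0:ℝ) • v₀ + sn 1 • v₁ + co 1 • w) ≤ 0
            rw [hco1, hsn1, zero_smul, zero_smul, one_smul, zero_add, add_zero]
            exact hPv₁neg.le
          · show 0 ≤ ((0:ℝ) • v₀ + sn 0 • v₁ + co 0 • w) ⬝ᵥ P *ᵥ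
              ((0:ℝ) • v₀ + sn 0 • v₁ + co 0 • w)
            rw [hco0, hsn0, zero_smul, zero_smul, one_smul, zero_add, zero_add]
            exact hpw.le
      · -- main case
        set ε : ℝ := if 0 < β * γ then -1 else 1 with hεdef
        have hεβγ : ε * (β * γ) < 0 := by
          rw [hεdef]
          split_ifs with h
          · linarith
          · have hne : β * γ ≠ 0 := mul_ne_zero hβ hγ
            have hlt : β * γ < 0 := lt_of_le_of_ne (not_lt.mp h) hne
            linarith
        have hε2 : ε ^ 2 = 1 := by rw [hεdef]; split_ifs <;> norm_num
        have hεne : ε ≠ 0 := by rw [hεdef]; split_ifs <;> norm_num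
        set κ := -2 * ε * β / γ with hκdef
        have hκpos : 0 ≤ κ := by
          have hrw : κ = -2 * (ε * (β * γ)) / γ ^ 2 := by
            rw [hκdef]
            field_simp
          rw [hrw]
          apply div_nonneg _ (sq_nonneg γ)
          nlinarith
        have hκγ : κ * γ = -2 * ε * β := by
          rw [hκdef, div_mul_cancel₀ _ hγ]
        set r : ℝ → ℝ := fun s => Real.sqrt (κ * (co s * sn s)) with hrdef
        have hrcont : Continuous r := Real.continuous_sqrt.comp
          (continuous_const.mul (hcocont.mul hsncont))
        have hrsq : ∀ s ∈ Set.Icc (0:ℝ) 1, r s ^ 2 = κ * (co s * sn s) := by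
          intro s hs
          exact Real.sq_sqrt (mul_nonneg hκpos (mul_nonneg (htrig s hs).1 (htrig s hs).2.1))
        have hr0 : r 0 = 0 := by
          show Real.sqrt (κ * (co 0 * sn 0)) = 0
          rw [hsn0]
          simp
        have hr1 : r 1 = 0 := by
          show Real.sqrt (κ * (co 1 * sn 1)) = 0
          rw [hco1]
          simp
        refine ivt (fun s => co s • v₀ + (ε * sn s) • v₁ + r s • w) ?_ ?_ ?_ ?_ ?_ ?_
        · exact (((hcocont.smul continuous_const).add
            ((continuous_const.mul hsncont).smul continuous_const)).add
            (hrcont.smul continuous_const)).continuousOn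
        · intro s hs
          exact W.add_mem (W.add_mem (W.smul_mem _ hv₀W) (W.smul_mem _ hv₁W))
            (W.smul_mem _ hwW)
        · intro s hs h
          obtain ⟨h1, h2, _⟩ := hindw _ _ _ h
          exact (htrig s hs).2.2 ⟨h1, (mul_eq_zero.mp h2).resolve_left hεne⟩
        · intro s hs
          show (co s • v₀ + (ε * sn s) • v₁ + r s • w) ⬝ᵥ Qm *ᵥ
            (co s • v₀ + (ε * sn s) • v₁ + r s • w) = 0
          rw [qf_lin3 Qm hQmsymm, hQv₀, hQv₁, ← hγdef, ← hβdef, hbw0, hbw1, hrsq s hs]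
          linear_combination (co s * sn s) * hκγ
        · show (co 1 • v₀ + (ε * sn 1) • v₁ + r 1 • w) ⬝ᵥ P *ᵥ
            (co 1 • v₀ + (ε * sn 1) • v₁ + r 1 • w) ≤ 0
          rw [hco1, hsn1, hr1, zero_smul, zero_smul, mul_one, zero_add, add_zero, qf_smul,
            hε2, one_mul]
          exact hPv₁neg.le
        · show 0 ≤ (co 0 • v₀ + (ε * sn 0) • v₁ + r 0 • w) ⬝ᵥ P *ᵥ
            (co 0 • v₀ + (ε * sn 0) • v₁ + r 0 • w)
          rw [hco0, hsn0, hr0, mul_zero, zero_smul, zero_smul, one_smul, add_zero, add_zero]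
          exact hPv₀pos.le
  -- the separating direction
  obtain ⟨μ, σ, hμσ, hposW⟩ : ∃ μ σ : ℝ, (μ, σ) ≠ (0, 0) ∧
      ∀ v : Fin n → ℝ, v ∈ W → v ≠ 0 → 0 < μ * q₁ v + σ * q₂ v := by
    haveI hWnt : Nontrivial ↥W := by
      rw [← Module.finrank_pos_iff (R := ℝ)]
      omega
    have hrank : 1 < Module.rank ℝ ↥W := by
      rw [← Module.finrank_eq_rank]
      exact_mod_cast by omega
    set S := Metric.sphere (0 : ↥W) 1 with hS
    set Fc : ↥W → ℂ := fun u => (↑(q₁ ↑u) + ↑(q₂ ↑u) * Complex.I : ℂ) with hFc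
    have hFcre : ∀ u : ↥W, (Fc u).re = q₁ ↑u := by intro u; simp [hFc]
    have hFcim : ∀ u : ↥W, (Fc u).im = q₂ ↑u := by intro u; simp [hFc]
    have hFcont : Continuous Fc := by
      apply Continuous.add
      · exact Complex.continuous_ofReal.comp ((cont_qf A).comp continuous_subtype_val)
      · exact (Complex.continuous_ofReal.comp ((cont_qf B).comp continuous_subtype_val)).mul
          continuous_const
    have hSne : S.Nonempty := NormedSpace.sphere_nonempty.mpr zero_le_one
    set C := Fc '' S with hC
    have hCne : C.Nonempty := hSne.image _
    have hCcomp : IsCompact C := (isCompact_sphere _ _).image hFcont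
    have hCconn : IsConnected C :=
      (isConnected_sphere hrank 0 zero_le_one).image Fc hFcont.continuousOn
    have hcoene : ∀ u : ↥W, u ∈ S → (↑u : Fin n → ℝ) ≠ 0 := by
      intro u hu h0
      have h1 : ‖u‖ = 1 := by simpa [hS, mem_sphere_zero_iff_norm] using hu
      have h2 : u = 0 := Subtype.ext h0
      rw [h2] at h1
      simp at h1
    have h0C : (0 : ℂ) ∉ C := by
      rintro ⟨u, huS, hu0⟩
      have h1 : q₁ ↑u = 0 := by rw [← hFcre, hu0]; simp
      have h2 : q₂ ↑u = 0 := by rw [← hFcim, hu0]; simp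
      exact hcoene u huS (hiso _ u.2 h1 h2)
    have hCne0 : ∀ c ∈ C, c ≠ 0 := fun c hc h => h0C (h ▸ hc)
    have hCanti : ∀ c₁ ∈ C, ∀ c₂ ∈ C, ∀ t : ℝ, 0 < t → c₂ ≠ (↑(-t) : ℂ) * c₁ := by
      rintro _ ⟨u₁, h₁, rfl⟩ _ ⟨u₂, h₂, rfl⟩ t ht heq
      have e1 : q₁ ↑u₂ = -t * q₁ ↑u₁ := by
        rw [← hFcre, ← hFcre, heq, Complex.re_ofReal_mul]
      have e2 : q₂ ↑u₂ = -t * q₂ ↑u₁ := by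
        rw [← hFcim, ← hFcim, heq, Complex.im_ofReal_mul]
      exact hant ↑u₁ ↑u₂ u₁.2 u₂.2 (hcoene u₁ h₁) (hcoene u₂ h₂) t ht ⟨e1, e2⟩
    obtain ⟨a₀, ha₀⟩ := hCne
    have ha₀0 : a₀ ≠ 0 := fun h => h0C (h ▸ ha₀)
    set θf : ℂ → ℝ := fun c => (c / a₀).arg with hθf
    have hslit : ∀ c ∈ C, c / a₀ ∈ Complex.slitPlane := by
      intro c hc
      rw [Complex.mem_slitPlane_iff]
      by_contra hcon
      push_neg at hcon
      obtain ⟨hre, him⟩ := hcon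
      set r := (c / a₀).re with hrdef
      have hz : c / a₀ = (r : ℂ) := Complex.ext rfl (by simp [him])
      have hc' : c = (r : ℂ) * a₀ := by
        rw [← hz, div_mul_cancel₀ _ ha₀0]
      rcases lt_or_eq_of_le hre with hlt | heq0
      · exact hCanti a₀ ha₀ c hc (-r) (by linarith) (by rw [neg_neg]; exact hc')
      · apply hCne0 c hc
        rw [hc', heq0]
        simp
    have hθcont : ContinuousOn θf C := by
      intro c hc
      apply ContinuousAt.continuousWithinAt
      exact ContinuousAt.comp (x := c) (Complex.continuousAt_arg (hslit c hc))
        ((continuous_id.div_const a₀).continuousAt)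
    set I := θf '' C with hI
    have hIcomp : IsCompact I := hCcomp.image_of_continuousOn hθcont
    have hIconn : IsConnected I := hCconn.image θf hθcont
    have hIne : I.Nonempty := hIconn.nonempty
    set α := sInf I with hα
    set β := sSup I with hβ
    have hαI : α ∈ I := hIcomp.sInf_mem hIne
    have hβI : β ∈ I := hIcomp.sSup_mem hIne
    have hrange : ∀ x ∈ I, -Real.pi < x ∧ x < Real.pi := by
      rintro _ ⟨c, hc, rfl⟩
      refine ⟨Complex.neg_pi_lt_arg _, lt_of_le_of_ne (Complex.arg_le_pi _) ?_⟩
      intro h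
      obtain ⟨hre, him⟩ := Complex.arg_eq_pi_iff.mp h
      have hsl := hslit c hc
      rw [Complex.mem_slitPlane_iff] at hsl
      rcases hsl with h' | h'
      · linarith
      · exact h' him
    have hgap : β - α < Real.pi := by
      by_contra hcon
      push_neg at hcon
      have hsub := hIconn.isPreconnected.Icc_subset hαI hβI
      have hmem : α + Real.pi ∈ I := hsub ⟨le_add_of_nonneg_right Real.pi_pos.le, by linarith⟩
      obtain ⟨c', hc', hc'eq⟩ := hmem
      obtain ⟨cα, hcα, hcαeq⟩ := hαI
      have h1 := Complex.norm_mul_exp_arg_mul_I (c' / a₀)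
      have h2 := Complex.norm_mul_exp_arg_mul_I (cα / a₀)
      have hc'eq' : (c' / a₀).arg = α + Real.pi := hc'eq
      have hcαeq' : (cα / a₀).arg = α := hcαeq
      rw [hc'eq'] at h1
      rw [hcαeq'] at h2
      set R₂ := ‖c' / a₀‖ with hR₂
      set R₁ := ‖cα / a₀‖ with hR₁
      have hR₁0 : 0 < R₁ := norm_pos_iff.mpr (div_ne_zero (hCne0 cα hcα) ha₀0)
      have hR₂0 : 0 < R₂ := norm_pos_iff.mpr (div_ne_zero (hCne0 c' hc') ha₀0)
      have hexp : Complex.exp (↑(α + Real.pi) * Complex.I)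
          = -Complex.exp (↑α * Complex.I) := by
        push_cast
        rw [add_mul, Complex.exp_add, Complex.exp_pi_mul_I]
        ring
      have e1 : c' = ↑R₂ * Complex.exp (↑(α + Real.pi) * Complex.I) * a₀ :=
        (div_eq_iff ha₀0).mp h1.symm
      rw [hexp] at e1
      have e2 : cα = ↑R₁ * Complex.exp (↑α * Complex.I) * a₀ :=
        (div_eq_iff ha₀0).mp h2.symm
      apply hCanti cα hcα c' hc' (R₂ / R₁) (by positivity)
      rw [e1, e2]
      have hR₁c : (↑R₁ : ℂ) ≠ 0 := Complex.ofReal_ne_zero.mpr hR₁0.ne'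
      push_cast
      field_simp
    set φ := (α + β) / 2 with hφ
    set d := a₀ * Complex.exp (↑φ * Complex.I) with hd
    have hd0 : d ≠ 0 := mul_ne_zero ha₀0 (Complex.exp_ne_zero _)
    have hαβ : α ≤ β := by
      obtain ⟨x, hx⟩ := hIne
      exact le_trans (csInf_le hIcomp.bddBelow hx) (le_csSup hIcomp.bddAbove hx)
    have hsep : ∀ c ∈ C, 0 < d.re * c.re + d.im * c.im := by
      intro c hc
      have hθI : θf c ∈ I := Set.mem_image_of_mem _ hc
      have hαle : α ≤ θf c := csInf_le hIcomp.bddBelow hθI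
      have hleβ : θf c ≤ β := le_csSup hIcomp.bddAbove hθI
      set ψ := θf c with hψ
      have hpolar := Complex.norm_mul_exp_arg_mul_I (c / a₀)
      have hψeq : (c / a₀).arg = ψ := rfl
      rw [hψeq] at hpolar
      set R := ‖c / a₀‖ with hR
      have hR0 : 0 < R := norm_pos_iff.mpr (div_ne_zero (hCne0 c hc) ha₀0)
      have hc' : c = ↑R * Complex.exp (↑ψ * Complex.I) * a₀ :=
        (div_eq_iff ha₀0).mp hpolar.symm
      have hmain : d.re * c.re + d.im * c.im = ((starRingEnd ℂ) d * c).re := by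
        simp only [Complex.mul_re, Complex.conj_re, Complex.conj_im]
        ring
      rw [hmain]
      have hconj : (starRingEnd ℂ) d = (starRingEnd ℂ) a₀ * Complex.exp (-(↑φ * Complex.I)) := by
        rw [hd, RingHom.map_mul]
        congr 1
        rw [← Complex.exp_conj]
        congr 1
        simp
      have hprod : (starRingEnd ℂ) a₀ * a₀ = ↑(Complex.normSq a₀) := by
        rw [mul_comm, Complex.mul_conj]
      have hexp2 : Complex.exp (-(↑φ * Complex.I)) * Complex.exp (↑ψ * Complex.I)
          = Complex.exp (↑(ψ - φ) * Complex.I) := by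
        rw [← Complex.exp_add]
        congr 1
        push_cast
        ring
      have hcalc : (starRingEnd ℂ) d * c
          = ↑(Complex.normSq a₀) * (↑R * Complex.exp (↑(ψ - φ) * Complex.I)) := by
        rw [hconj, hc', ← hprod, ← hexp2]
        ring
      rw [hcalc, Complex.re_ofReal_mul, Complex.re_ofReal_mul, Complex.exp_ofReal_mul_I_re]
      have hcos : 0 < Real.cos (ψ - φ) := by
        apply Real.cos_pos_of_mem_Ioo
        constructor
        · rw [hφ]; linarith
        · rw [hφ]; linarith
      exact mul_pos (Complex.normSq_pos.mpr ha₀0) (mul_pos hR0 hcos)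
    refine ⟨d.re, d.im, ?_, ?_⟩
    · intro h
      rw [Prod.mk.injEq] at h
      exact hd0 (Complex.ext h.1 h.2)
    · intro v hv hv0
      set u : ↥W := ⟨v, hv⟩ with hu
      have hvnorm : ‖v‖ ≠ 0 := norm_ne_zero_iff.mpr hv0
      set u' : ↥W := (‖v‖⁻¹ : ℝ) • u with hu'
      have hu'S : u' ∈ S := by
        rw [hS, mem_sphere_zero_iff_norm]
        have hnu : ‖u'‖ = ‖(‖v‖⁻¹ : ℝ) • v‖ := rfl
        rw [hnu, norm_smul]
        simp [Real.norm_eq_abs, abs_of_nonneg (inv_nonneg.mpr (norm_nonneg v)),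
          inv_mul_cancel₀ hvnorm]
      have hcoe : (↑u' : Fin n → ℝ) = ‖v‖⁻¹ • v := rfl
      have hkey := hsep (Fc u') ⟨u', hu'S, rfl⟩
      rw [hFcre, hFcim, hcoe] at hkey
      have hq1' : q₁ (‖v‖⁻¹ • v) = (‖v‖⁻¹) ^ 2 * q₁ v := qf_smul A _ v
      have hq2' : q₂ (‖v‖⁻¹ • v) = (‖v‖⁻¹) ^ 2 * q₂ v := qf_smul B _ v
      rw [hq1', hq2'] at hkey
      have hpos2 : 0 < (‖v‖⁻¹ : ℝ) ^ 2 := by positivity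
      by_contra hcon
      push_neg at hcon
      nlinarith [hkey, hpos2, hcon]
  -- assembly
  have hMsymm : (μ • A + σ • B).IsSymm := by
    have hA' : Aᵀ = A := hA
    have hB' : Bᵀ = B := hB
    show (μ • A + σ • B)ᵀ = μ • A + σ • B
    rw [Matrix.transpose_add, Matrix.transpose_smul, Matrix.transpose_smul, hA', hB']
  have hMk : ∀ k ∈ K, (μ • A + σ • B) *ᵥ k = 0 := by
    intro k hk
    obtain ⟨h1, h2⟩ := (hKmem k).mp hk
    rw [Matrix.add_mulVec, Matrix.smul_mulVec, Matrix.smul_mulVec, h1, h2]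
    simp
  have hdecomp : ∀ x : Fin n → ℝ, ∃ k ∈ K, ∃ w ∈ W, x = k + w := by
    intro x
    have hx : x ∈ K ⊔ W := by rw [hKW.sup_eq_top]; trivial
    obtain ⟨k, hk, w, hw, hkw⟩ := Submodule.mem_sup.mp hx
    exact ⟨k, hk, w, hw, hkw.symm⟩
  have hqfx : ∀ k ∈ K, ∀ w : Fin n → ℝ,
      (k + w) ⬝ᵥ (μ • A + σ • B) *ᵥ (k + w) = w ⬝ᵥ (μ • A + σ • B) *ᵥ w := by
    intro k hk w
    rw [qf_add _ hMsymm, bilin_comm _ hMsymm k w]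
    have h0 : (μ • A + σ • B) *ᵥ k = 0 := hMk k hk
    rw [h0, dotProduct_zero, dotProduct_zero]
    ring
  have hqfpos : ∀ w ∈ W, 0 ≤ w ⬝ᵥ (μ • A + σ • B) *ᵥ w := by
    intro w hw
    rcases eq_or_ne w 0 with h | h
    · simp [h]
    · have := hposW w hw h
      rw [qf_combo]
      linarith
  refine ⟨μ, σ, hμσ, Matrix.posSemidef_iff_dotProduct_mulVec.mpr ⟨hMsymm, ?_⟩, ?_⟩
  · intro x
    obtain ⟨k, hk, w, hw, rfl⟩ := hdecomp x
    have : star (k + w) = k + w := by simp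
    rw [this, hqfx k hk w]
    exact hqfpos w hw
  · intro x
    constructor
    · intro hx
      obtain ⟨k, hk, w, hw, rfl⟩ := hdecomp x
      have hq0 : (k + w) ⬝ᵥ (μ • A + σ • B) *ᵥ (k + w) = 0 := by rw [hx, dotProduct_zero]
      rw [hqfx k hk w] at hq0
      have hw0 : w = 0 := by
        by_contra h
        have := hposW w hw h
        rw [qf_combo] at hq0
        linarith
      rw [hw0, add_zero] at hx ⊢
      exact (hKmem k).mp hk
    · rintro ⟨h1, h2⟩
      rw [Matrix.add_mulVec, Matrix.smul_mulVec, Matrix.smul_mulVec, h1, h2]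
      simp
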